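/- Let f be a monic irreducible divisor of x^{2n} − 1 in F[x] with f ≠ f*. Then f* is also a monic irreducible divisor of x^{2n} − 1, and if e_f and e_{f*} are idempotents of F[x]/(x^{2n} − 1) generating the ideals generated by the images of (x^{2n} − 1)/f and (x^{2n} − 1)/f* respectively, and π : F[x]/(x^{2n} − 1) → F[Q_{4n}] is the F-algebra homomorphism sending the class of x to the group element x, then π(e_f) + π(e_{f*}) is a central idempotent of F[Q_{4n}] and dim_F (F[Q_{4n}]·(π(e_f) + π(e_{f*}))) = 4·deg f. -/

import Mathlib

open Polynomial

/-- `Rq F N` is the quotient ring `F[x]/(x^N - 1)`. -/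
abbrev Rq (F : Type*) [Field F] (N : ℕ) : Type _ :=
  F[X] ⧸ Ideal.span ({X ^ N - 1} : Set F[X])

/-- The canonical projection `F[x] → F[x]/(x^N - 1)`. -/
noncomputable abbrev mkq (F : Type*) [Field F] (N : ℕ) : F[X] →+* Rq F N :=
  Ideal.Quotient.mk (Ideal.span ({X ^ N - 1} : Set F[X]))

/-- The reciprocal polynomial `p*(x) = p(0)⁻¹ · x^(deg p) · p(1/x)` of `p`. -/
noncomputable def recip {F : Type*} [Field F] (p : F[X]) : F[X] :=
  C (p.coeff 0)⁻¹ * p.reverse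

set_option synthInstance.maxHeartbeats 1000000
set_option maxHeartbeats 1000000

namespace StmtAux


variable {F : Type*} [Field F]

theorem reverse_reverse {R : Type*} [Semiring R] (p : R[X]) (h0 : p.natTrailingDegree = 0) :
    p.reverse.reverse = p := by
  ext k
  rw [coeff_reverse, coeff_reverse, reverse_natDegree, h0, Nat.sub_zero, revAt_invol]

theorem recip_mul (p q : F[X]) : recip (p * q) = recip p * recip q := by
  unfold recip
  rw [mul_coeff_zero, mul_inv, reverse_mul_of_domain, C_mul]
  ring

theorem natTrailing_zero {p : F[X]} (h0 : p.coeff 0 ≠ 0) : p.natTrailingDegree = 0 :=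
  natTrailingDegree_eq_zero_of_constantCoeff_ne_zero h0

theorem trailingCoeff_of_ne {p : F[X]} (h0 : p.coeff 0 ≠ 0) : p.trailingCoeff = p.coeff 0 := by
  rw [trailingCoeff, natTrailing_zero h0]

theorem recip_monic {p : F[X]} (hm : p.Monic) (h0 : p.coeff 0 ≠ 0) : (recip p).Monic := by
  have : (recip p).leadingCoeff = 1 := by
    rw [recip, leadingCoeff_mul, leadingCoeff_C, reverse_leadingCoeff, trailingCoeff_of_ne h0,
      inv_mul_cancel₀ h0]
  exact this

theorem recip_natDegree {p : F[X]} (h0 : p.coeff 0 ≠ 0) :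
    (recip p).natDegree = p.natDegree := by
  rw [recip, natDegree_C_mul (inv_ne_zero h0), reverse_natDegree, natTrailing_zero h0,
    Nat.sub_zero]

theorem recip_coeff_zero {p : F[X]} (hm : p.Monic) : (recip p).coeff 0 = (p.coeff 0)⁻¹ := by
  rw [recip, coeff_C_mul, coeff_zero_reverse, hm.leadingCoeff, mul_one]

theorem reverse_C_mul {p : F[X]} {c : F} (hc : c ≠ 0) :
    (C c * p).reverse = C c * p.reverse := by
  unfold Polynomial.reverse
  rw [natDegree_C_mul hc, reflect_C_mul]

theorem recip_recip {p : F[X]} (hm : p.Monic) (h0 : p.coeff 0 ≠ 0) : recip (recip p) = p := by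
  have h1 : (recip p).coeff 0 = (p.coeff 0)⁻¹ := recip_coeff_zero hm
  rw [recip, h1, inv_inv, recip, reverse_C_mul (inv_ne_zero h0), ← mul_assoc, ← C_mul,
    mul_inv_cancel₀ h0, C_1, one_mul, reverse_reverse p (natTrailing_zero h0)]

theorem recip_irreducible {p : F[X]} (hm : p.Monic) (h0 : p.coeff 0 ≠ 0)
    (hirr : Irreducible p) : Irreducible (recip p) := by
  have hd : 0 < p.natDegree := hirr.natDegree_pos
  have hrd : (recip p).natDegree = p.natDegree := recip_natDegree h0
  constructor
  · intro hu
    have := natDegree_eq_zero_of_isUnit hu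
    omega
  · intro a b hab
    have hr0 : (recip p).coeff 0 ≠ 0 := by
      rw [recip_coeff_zero hm]; exact inv_ne_zero h0
    have hab0 : a.coeff 0 * b.coeff 0 ≠ 0 := by
      rw [← mul_coeff_zero, ← hab]; exact hr0
    have ha0 : a.coeff 0 ≠ 0 := fun h => hab0 (by rw [h, zero_mul])
    have hb0 : b.coeff 0 ≠ 0 := fun h => hab0 (by rw [h, mul_zero])
    have hp : p = recip a * recip b := by
      rw [← recip_mul, ← hab, recip_recip hm h0]
    rcases hirr.isUnit_or_isUnit hp with h | h
    · left
      have hda : a.natDegree = 0 := by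
        rw [← recip_natDegree ha0]; exact natDegree_eq_zero_of_isUnit h
      obtain ⟨c, rfl⟩ := natDegree_eq_zero.mp hda
      exact (isUnit_C).mpr (Ne.isUnit (by simpa using ha0))
    · right
      have hdb : b.natDegree = 0 := by
        rw [← recip_natDegree hb0]; exact natDegree_eq_zero_of_isUnit h
      obtain ⟨c, rfl⟩ := natDegree_eq_zero.mp hdb
      exact (isUnit_C).mpr (Ne.isUnit (by simpa using hb0))

theorem idem_unique {R : Type*} [CommRing R] {x y : R} (hx : x * x = x) (hy : y * y = y)
    (h : Ideal.span {x} = Ideal.span {y}) : x = y := by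
  have hxy : x ∈ Ideal.span {y} := h ▸ Ideal.subset_span rfl
  have hyx : y ∈ Ideal.span {x} := h ▸ Ideal.subset_span rfl
  obtain ⟨r, hr⟩ := Ideal.mem_span_singleton'.mp hxy
  obtain ⟨s, hs⟩ := Ideal.mem_span_singleton'.mp hyx
  have h1 : x * y = x := by rw [← hr, mul_assoc, hy, hr]
  have h2 : y * x = y := by rw [← hs, mul_assoc, hx, hs]
  rw [← h1, mul_comm, h2]



variable {F : Type*} [Field F]

theorem hXN_monic {N : ℕ} (hN : N ≠ 0) : (X ^ N - 1 : F[X]).Monic := by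
  simpa using monic_X_pow_sub_C (1 : F) hN

theorem hXN_ne_zero {N : ℕ} (hN : N ≠ 0) : (X ^ N - 1 : F[X]) ≠ 0 := by
  simpa using X_pow_sub_C_ne_zero (Nat.pos_of_ne_zero hN) (1 : F)

theorem hXN_natDegree (N : ℕ) : (X ^ N - 1 : F[X]).natDegree = N := by
  simpa using natDegree_X_pow_sub_C (n := N) (r := (1 : F))

theorem mk_C_mul {N : ℕ} (a : F) (p : F[X]) :
    mkq F N (C a * p) = a • mkq F N p := by
  rw [← smul_eq_C_mul, ← Ideal.Quotient.mkₐ_eq_mk F, map_smul]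

theorem mk_eq_zero_iff {N : ℕ} (p : F[X]) :
    mkq F N p = 0 ↔ (X ^ N - 1 : F[X]) ∣ p := by
  rw [Ideal.Quotient.eq_zero_iff_mem, Ideal.mem_span_singleton]

/-- The powers `x^i`, `i < N`, span the quotient ring. -/
theorem span_powers_eq_top {N : ℕ} (hN : N ≠ 0) :
    Submodule.span F (Set.range fun i : Fin N => (mkq F N X) ^ (i : ℕ)) = ⊤ := by
  rw [Submodule.eq_top_iff']
  intro z
  obtain ⟨p, rfl⟩ := Ideal.Quotient.mk_surjective z
  have hmod : mkq F N p = mkq F N (p %ₘ (X ^ N - 1)) := by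
    conv_lhs => rw [← modByMonic_add_div p (X ^ N - 1)]
    rw [map_add, map_mul, (mk_eq_zero_iff (X ^ N - 1 : F[X])).mpr dvd_rfl, zero_mul, add_zero]
  have hdeg : (p %ₘ (X ^ N - 1)).natDegree < N := by
    rcases eq_or_ne (p %ₘ (X ^ N - 1)) 0 with h | h
    · rw [h, natDegree_zero]; omega
    · have := degree_modByMonic_lt p (hXN_monic hN)
      have := natDegree_lt_natDegree h this
      rwa [hXN_natDegree N] at this
  rw [hmod, (p %ₘ (X ^ N - 1)).as_sum_range' N hdeg, map_sum]
  apply Submodule.sum_mem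
  intro i hi
  rw [← C_mul_X_pow_eq_monomial, mk_C_mul, map_pow]
  exact Submodule.smul_mem _ _ (Submodule.subset_span ⟨⟨i, Finset.mem_range.mp hi⟩, rfl⟩)

theorem finiteDimensional_Rq {N : ℕ} (hN : N ≠ 0) : FiniteDimensional F (Rq F N) := by
  classical
  constructor
  refine ⟨Finset.univ.image fun i : Fin N => (mkq F N X) ^ (i : ℕ), ?_⟩
  rw [Finset.coe_image, Finset.coe_univ, Set.image_univ]
  exact span_powers_eq_top hN

/-- Dimension of the ideal generated by `g` in `F[x]/(x^N-1)` where `x^N - 1 = f * g`. -/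
theorem finrank_span_mk {N : ℕ} (hN : N ≠ 0) {f g : F[X]} (hf : f.Monic)
    (hd : 0 < f.natDegree) (hfg : f * g = X ^ N - 1) :
    Module.finrank F ((Ideal.span {mkq F N g}).restrictScalars F) = f.natDegree := by
  have hg0 : g ≠ 0 := by
    intro h
    exact hXN_ne_zero hN (by rw [← hfg, h, mul_zero])
  set d := f.natDegree with hdd
  set b : Fin d → Rq F N := fun i => mkq F N (X ^ (i : ℕ) * g) with hb
  have hli : LinearIndependent F b := by
    rw [Fintype.linearIndependent_iff]
    intro v hv i
    set p : F[X] := ∑ j : Fin d, C (v j) * X ^ (j : ℕ) with hp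
    have hmkp : mkq F N (p * g) = ∑ j : Fin d, v j • b j := by
      rw [hp, Finset.sum_mul, map_sum]
      refine Finset.sum_congr rfl fun j _ => ?_
      rw [mul_assoc, mk_C_mul]
    have hpg : mkq F N (p * g) = 0 := by rw [hmkp, hv]
    have hdvd : f ∣ p := by
      have h1 : (X ^ N - 1 : F[X]) ∣ p * g := (mk_eq_zero_iff _).mp hpg
      rw [← hfg] at h1
      exact (mul_dvd_mul_iff_right hg0).mp (by rwa [mul_comm f g] at h1 ⊢)
    have h2 : p.degree < (d : ℕ) := by
      refine lt_of_le_of_lt (degree_sum_le _ _) ?_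
      rw [Finset.sup_lt_iff (by exact_mod_cast WithBot.bot_lt_coe d)]
      intro j _
      exact lt_of_le_of_lt (degree_C_mul_X_pow_le _ _) (by exact_mod_cast j.isLt)
    have hp0 : p = 0 := by
      rcases eq_or_ne p 0 with h | h
      · exact h
      · refine eq_zero_of_dvd_of_natDegree_lt hdvd ?_
        rw [← hdd]
        exact (natDegree_lt_iff_degree_lt h).mpr h2
    have : p.coeff (i : ℕ) = v i := by
      rw [hp, finset_sum_coeff]
      rw [Finset.sum_eq_single i]
      · rw [coeff_C_mul, coeff_X_pow, if_pos rfl, mul_one]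
      · intro j _ hji
        rw [coeff_C_mul, coeff_X_pow, if_neg (fun h => hji (Fin.ext h.symm)), mul_zero]
      · intro h; exact absurd (Finset.mem_univ i) h
    rw [← this, hp0, coeff_zero]
  have hspan : Submodule.span F (Set.range b) =
      (Ideal.span {mkq F N g}).restrictScalars F := by
    apply le_antisymm
    · rw [Submodule.span_le]
      rintro _ ⟨i, rfl⟩
      show b i ∈ Ideal.span {mkq F N g}
      exact Ideal.mem_span_singleton'.mpr ⟨mkq F N (X ^ (i : ℕ)), by rw [← map_mul]⟩
    · intro x hx
      obtain ⟨r, hr⟩ := Ideal.mem_span_singleton'.mp hx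
      obtain ⟨p, rfl⟩ := Ideal.Quotient.mk_surjective r
      have hx' : x = mkq F N (p * g) := by rw [← hr, map_mul]
      set q := p %ₘ f with hq
      have hxq : x = mkq F N (q * g) := by
        rw [hx']
        conv_lhs => rw [← modByMonic_add_div p f]
        have hz : mkq F N ((X ^ N - 1) * (p /ₘ f)) = 0 :=
          (mk_eq_zero_iff _).mpr (dvd_mul_right _ _)
        rw [add_mul, map_add,
          show f * (p /ₘ f) * g = (X ^ N - 1) * (p /ₘ f) by rw [← hfg]; ring, hz, add_zero]
      have hqd : q.natDegree < d := by
        rcases eq_or_ne q 0 with h | h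
        · rw [h, natDegree_zero]; omega
        · have := degree_modByMonic_lt p hf
          exact natDegree_lt_natDegree h this
      rw [hxq, q.as_sum_range' d hqd, Finset.sum_mul, map_sum]
      apply Submodule.sum_mem
      intro j hj
      rw [← C_mul_X_pow_eq_monomial, mul_assoc, mk_C_mul]
      exact Submodule.smul_mem _ _
        (Submodule.subset_span ⟨⟨j, Finset.mem_range.mp hj⟩, rfl⟩)
  rw [← hspan, finrank_span_eq_card hli, Fintype.card_fin]

omit [Field F] in
theorem restrictScalars_sup {K R M : Type*} [Semiring K] [Semiring R] [AddCommMonoid M]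
    [Module R M] [Module K M] [SMul K R] [IsScalarTower K R M] (p q : Submodule R M) :
    (p ⊔ q).restrictScalars K = p.restrictScalars K ⊔ q.restrictScalars K := by
  ext x
  simp only [Submodule.restrictScalars_mem, Submodule.mem_sup]

end StmtAux

open QuaternionGroup StmtAux Module

set_option maxHeartbeats 4000000 in
set_option synthInstance.maxHeartbeats 400000 in
theorem stmt_17 {F : Type*} [Field F] {n : ℕ} (hn : 1 ≤ n)
    (hchar : ((4 * n : ℕ) : F) ≠ 0)
    (f : F[X]) (hmonic : f.Monic) (hirr : Irreducible f)
    (hdvd : f ∣ X ^ (2 * n) - 1) (hne : f ≠ recip f)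
    (e estar : Rq F (2 * n)) (hidem : e * e = e) (hidemstar : estar * estar = estar)
    (hgen : Ideal.span {e} = Ideal.span {mkq F (2 * n) ((X ^ (2 * n) - 1) /ₘ f)})
    (hgenstar : Ideal.span {estar} =
      Ideal.span {mkq F (2 * n) ((X ^ (2 * n) - 1) /ₘ recip f)})
    (π : Rq F (2 * n) →ₐ[F] MonoidAlgebra F (QuaternionGroup n))
    (hπ : π (mkq F (2 * n) X) =
      MonoidAlgebra.of F (QuaternionGroup n) (QuaternionGroup.a 1)) :
    (recip f).Monic ∧ Irreducible (recip f) ∧ recip f ∣ X ^ (2 * n) - 1 ∧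
    (π e + π estar) * (π e + π estar) = π e + π estar ∧
    (∀ z, (π e + π estar) * z = z * (π e + π estar)) ∧
    Module.finrank F ((Ideal.span {π e + π estar}).restrictScalars F) =
      4 * f.natDegree := by
  classical
  have hn2 : (2 * n) ≠ 0 := by omega
  haveI : NeZero n := ⟨by omega⟩
  haveI : NeZero (2 * n) := ⟨hn2⟩
  have hH : (X ^ (2 * n) - 1 : F[X]).Monic := hXN_monic hn2
  have hHne : (X ^ (2 * n) - 1 : F[X]) ≠ 0 := hXN_ne_zero hn2
  -- the constant coefficient of f is nonzero
  have hf0 : f.coeff 0 ≠ 0 := by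
    intro h
    have h1 : f.eval 0 ∣ (X ^ (2 * n) - 1 : F[X]).eval 0 := eval_dvd hdvd
    rw [← coeff_zero_eq_eval_zero, h] at h1
    have h2 : (X ^ (2 * n) - 1 : F[X]).eval 0 = -1 := by
      simp [zero_pow hn2]
    rw [h2, zero_dvd_iff, neg_eq_zero] at h1
    exact one_ne_zero h1
  have hdd : 0 < f.natDegree := hirr.natDegree_pos
  -- factorization x^{2n} - 1 = f * g
  have hg : f * ((X ^ (2 * n) - 1) /ₘ f) = X ^ (2 * n) - 1 := by
    conv_rhs => rw [← modByMonic_add_div (X ^ (2 * n) - 1) f]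
    rw [(modByMonic_eq_zero_iff_dvd hmonic).mpr hdvd, zero_add]
  set g : F[X] := (X ^ (2 * n) - 1) /ₘ f with hgdef
  have hgne : g ≠ 0 := by
    intro h
    rw [h, mul_zero] at hg
    exact hHne hg.symm
  have hg0 : g.coeff 0 ≠ 0 := by
    intro h
    have h3 := congrArg (fun p => Polynomial.coeff p 0) hg
    simp only [mul_coeff_zero, h, mul_zero] at h3
    have h2 : (X ^ (2 * n) - 1 : F[X]).coeff 0 = -1 := by
      simp [coeff_X_pow]; omega
    rw [h2] at h3
    exact one_ne_zero (neg_eq_zero.mp h3.symm)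
  have hgm : g.Monic := by
    have h1 := hH
    rw [← hg] at h1
    exact hmonic.of_mul_monic_left h1
  -- facts about recip f
  have hfsm : (recip f).Monic := recip_monic hmonic hf0
  have hfsd : (recip f).natDegree = f.natDegree := recip_natDegree hf0
  have hfsirr : Irreducible (recip f) := recip_irreducible hmonic hf0 hirr
  have hrecipH : recip (X ^ (2 * n) - 1 : F[X]) = X ^ (2 * n) - 1 := by
    have h1 : (X ^ (2 * n) - 1 : F[X]).coeff 0 = -1 := by
      simp [coeff_X_pow]; omega
    have h2 : (X ^ (2 * n) - 1 : F[X]).reverse = 1 - X ^ (2 * n) := by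
      unfold Polynomial.reverse
      rw [hXN_natDegree (2 * n)]
      have h4 : (X ^ (2 * n) - 1 : F[X]) = X ^ (2 * n) - X ^ 0 := by rw [pow_zero]
      rw [h4, reflect_sub, reflect_monomial, reflect_monomial, revAt_le (le_refl (2 * n)),
        revAt_le (Nat.zero_le _), Nat.sub_self, Nat.sub_zero, pow_zero]
    rw [recip, h1, h2, inv_neg, inv_one, map_neg, map_one]
    ring
  have hfsg : recip f * recip g = X ^ (2 * n) - 1 := by
    rw [← recip_mul, hg, hrecipH]
  have hfsdvd : recip f ∣ X ^ (2 * n) - 1 := ⟨recip g, hfsg.symm⟩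
  have hgs : (X ^ (2 * n) - 1) /ₘ recip f = recip g := by
    conv_lhs => rw [← hfsg]
    exact mul_divByMonic_cancel_left _ hfsm
  rw [hgs] at hgenstar
  -- e * estar = 0
  have hndvd : ¬ f ∣ recip f := by
    intro hdv
    obtain ⟨q, hq⟩ := hdv
    have hq0 : q ≠ 0 := by
      intro h; rw [h, mul_zero] at hq; exact hfsm.ne_zero hq
    have hqd : q.natDegree = 0 := by
      have := congrArg natDegree hq
      rw [natDegree_mul hmonic.ne_zero hq0, hfsd] at this
      omega
    have hqm : q.Monic := by
      have := congrArg leadingCoeff hq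
      rwa [leadingCoeff_mul, hmonic.leadingCoeff, one_mul, hfsm.leadingCoeff, eq_comm] at this
    have : q = 1 := hqm.natDegree_eq_zero.mp hqd
    rw [this, mul_one] at hq
    exact hne hq.symm
  have hcop : IsCoprime f (recip f) := hirr.coprime_iff_not_dvd.mpr hndvd
  have hffs : f * recip f ∣ X ^ (2 * n) - 1 := hcop.mul_dvd hdvd hfsdvd
  have hfsg' : recip f ∣ g := by
    have h2 : f * recip f ∣ f * g := by rw [hg]; exact hffs
    exact (mul_dvd_mul_iff_left hmonic.ne_zero).mp h2
  have hHdvdggs : (X ^ (2 * n) - 1 : F[X]) ∣ g * recip g := by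
    obtain ⟨w, hw⟩ := hfsg'
    exact ⟨w, by rw [← hfsg, hw]; ring⟩
  have he1 : e ∈ Ideal.span {mkq F (2 * n) g} := hgen ▸ Ideal.subset_span rfl
  have hes1 : estar ∈ Ideal.span {mkq F (2 * n) (recip g)} :=
    hgenstar ▸ Ideal.subset_span rfl
  obtain ⟨r0, hr0⟩ := Ideal.mem_span_singleton'.mp he1
  obtain ⟨s0, hs0⟩ := Ideal.mem_span_singleton'.mp hes1
  have hee0 : e * estar = 0 := by
    rw [← hr0, ← hs0]
    have : mkq F (2 * n) g * mkq F (2 * n) (recip g) = 0 := by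
      rw [← map_mul]
      exact (mk_eq_zero_iff _).mpr hHdvdggs
    rw [show r0 * mkq F (2 * n) g * (s0 * mkq F (2 * n) (recip g))
        = r0 * s0 * (mkq F (2 * n) g * mkq F (2 * n) (recip g)) by ring, this, mul_zero]
  have hese : estar * e = 0 := by rw [mul_comm estar e]; exact hee0
  -- quotient ring generalities
  set t : Rq F (2 * n) := mkq F (2 * n) X with ht
  have htN : t ^ (2 * n) = 1 := by
    have h1 : mkq F (2 * n) (X ^ (2 * n) - 1) = 0 := (mk_eq_zero_iff _).mpr dvd_rfl
    rw [map_sub, map_pow, map_one, sub_eq_zero] at h1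
    exact h1
  have hts : t * t ^ (2 * n - 1) = 1 := by
    rw [← pow_succ', show 2 * n - 1 + 1 = 2 * n by omega, htN]
  have hst : t ^ (2 * n - 1) * t = 1 := by rw [mul_comm (t ^ (2 * n - 1)) t]; exact hts
  set u : MonoidAlgebra F (QuaternionGroup n) :=
    MonoidAlgebra.of F (QuaternionGroup n) (QuaternionGroup.a 1) with hu
  set Y : MonoidAlgebra F (QuaternionGroup n) :=
    MonoidAlgebra.of F (QuaternionGroup n) (QuaternionGroup.xa 0) with hY
  have hπt : π t = u := hπ
  have hofk : ∀ k : ℕ, π (t ^ k)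
      = MonoidAlgebra.of F (QuaternionGroup n) (QuaternionGroup.a (k : ZMod (2 * n))) := by
    intro k
    rw [map_pow, hπt, hu, ← map_pow, QuaternionGroup.a_one_pow]
  have hrep : ∀ z : Rq F (2 * n), ∃ v : Fin (2 * n) → F,
      ∑ i : Fin (2 * n), v i • t ^ (i : ℕ) = z := by
    intro z
    have hz : z ∈ Submodule.span F (Set.range fun i : Fin (2 * n) => t ^ (i : ℕ)) := by
      rw [span_powers_eq_top hn2]; trivial
    exact (Submodule.mem_span_range_iff_exists_fun F).mp hz
  -- linear independence of the images of powers of t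
  have hainj : Function.Injective
      (fun i : Fin (2 * n) => QuaternionGroup.a ((i : ℕ) : ZMod (2 * n))) := by
    intro i j hij
    simp only [QuaternionGroup.a.injEq] at hij
    have := congrArg ZMod.val hij
    rw [ZMod.val_natCast_of_lt i.isLt, ZMod.val_natCast_of_lt j.isLt] at this
    exact Fin.ext this
  have hli : LinearIndependent F (fun i : Fin (2 * n) =>
      MonoidAlgebra.of F (QuaternionGroup n) (QuaternionGroup.a ((i : ℕ) : ZMod (2 * n)))) := by
    have hb : LinearIndependent F
        (fun g : QuaternionGroup n => (MonoidAlgebra.single g 1 : MonoidAlgebra F (QuaternionGroup n))) := by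
      have := (MonoidAlgebra.basis (QuaternionGroup n) F).linearIndependent
      exact this
    exact hb.comp _ hainj
  have hπinj : Function.Injective π := by
    rw [injective_iff_map_eq_zero]
    intro z hz
    obtain ⟨v, hv⟩ := hrep z
    rw [← hv, map_sum] at hz
    simp only [map_smul, hofk] at hz
    have hv0 := Fintype.linearIndependent_iff.mp hli v hz
    rw [← hv]
    simp [hv0]
  -- support submodules
  set Sa : Submodule F (MonoidAlgebra F (QuaternionGroup n)) :=
    MonoidAlgebra.supported F F (Set.range (QuaternionGroup.a : ZMod (2 * n) → QuaternionGroup n))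
    with hSadef
  set Sxa : Submodule F (MonoidAlgebra F (QuaternionGroup n)) :=
    MonoidAlgebra.supported F F (Set.range (QuaternionGroup.xa : ZMod (2 * n) → QuaternionGroup n))
    with hSxadef
  have hsingle_mul_Y : ∀ (i : ZMod (2 * n)) (c : F),
      (MonoidAlgebra.single (QuaternionGroup.a i) c : MonoidAlgebra F (QuaternionGroup n)) * Y
        = MonoidAlgebra.single (QuaternionGroup.xa (-i)) c := by
    intro i c
    rw [hY, show (MonoidAlgebra.of F (QuaternionGroup n) (QuaternionGroup.xa 0))
        = MonoidAlgebra.single (QuaternionGroup.xa 0) 1 from rfl,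
      MonoidAlgebra.single_mul_single, QuaternionGroup.a_mul_xa, zero_sub, mul_one]
  have hmemSa : ∀ z : Rq F (2 * n), π z ∈ Sa := by
    intro z
    obtain ⟨v, hv⟩ := hrep z
    rw [← hv, map_sum]
    refine Submodule.sum_mem _ fun i _ => ?_
    rw [map_smul, hofk]
    exact Submodule.smul_mem _ _ (Finsupp.single_mem_supported F 1 ⟨_, rfl⟩)
  have hmemSxa : ∀ z : Rq F (2 * n), π z * Y ∈ Sxa := by
    intro z
    obtain ⟨v, hv⟩ := hrep z
    rw [← hv, map_sum, Finset.sum_mul]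
    refine Submodule.sum_mem _ fun i _ => ?_
    rw [map_smul, hofk, smul_mul_assoc,
      show MonoidAlgebra.of F (QuaternionGroup n) (QuaternionGroup.a ((i : ℕ) : ZMod (2 * n)))
        = MonoidAlgebra.single (QuaternionGroup.a ((i : ℕ) : ZMod (2 * n))) 1 from rfl,
      hsingle_mul_Y]
    exact Submodule.smul_mem _ _ (Finsupp.single_mem_supported F 1 ⟨_, rfl⟩)
  -- the reversal automorphism τ
  have hs0N : ((t ^ (2 * n - 1)) ^ (2 * n) : Rq F (2 * n)) = 1 := by
    rw [← pow_mul, mul_comm (2 * n - 1) (2 * n), pow_mul, htN, one_pow]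
  set τ : Rq F (2 * n) →ₐ[F] Rq F (2 * n) :=
    Ideal.Quotient.liftₐ _ (aeval (t ^ (2 * n - 1))) (by
      intro p hp
      obtain ⟨q, rfl⟩ := Ideal.mem_span_singleton.mp hp
      rw [map_mul, map_sub, map_pow, aeval_X, map_one, hs0N, sub_self, zero_mul]) with hτdef
  have hτmk : ∀ p : F[X], τ (mkq F (2 * n) p) = aeval (t ^ (2 * n - 1)) p := by
    intro p
    rw [hτdef, Ideal.Quotient.liftₐ_apply]
    rfl
  have hτt : τ t = t ^ (2 * n - 1) := by rw [ht, hτmk, aeval_X]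
  have haevalt : ∀ p : F[X], aeval t p = mkq F (2 * n) p := by
    intro p
    have h1 := Polynomial.aeval_algHom_apply
      (Ideal.Quotient.mkₐ F (Ideal.span ({X ^ (2 * n) - 1} : Set F[X]))) X p
    rw [aeval_X_left_apply, Ideal.Quotient.mkₐ_eq_mk] at h1
    exact h1
  letI : Invertible (t ^ (2 * n - 1) : Rq F (2 * n)) := ⟨t, hts, hst⟩
  have hrev : ∀ q : F[X],
      mkq F (2 * n) q.reverse * (t ^ (2 * n - 1)) ^ q.natDegree = τ (mkq F (2 * n) q) := by
    intro q
    have h1 := eval₂_reverse_mul_pow (algebraMap F (Rq F (2 * n))) (t ^ (2 * n - 1)) q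
    rw [← aeval_def, ← aeval_def, ← hτmk] at h1
    rw [← h1]
    congr 1
    rw [show (⅟(t ^ (2 * n - 1)) : Rq F (2 * n)) = t from rfl, haevalt]
  have hs0unit : IsUnit ((t ^ (2 * n - 1) : Rq F (2 * n))) := isUnit_of_invertible _
  -- τ maps the ideal of e to the ideal of estar and vice versa
  have hassoc : ∀ q : F[X], q.coeff 0 ≠ 0 →
      Ideal.span {τ (mkq F (2 * n) q)} = Ideal.span {mkq F (2 * n) (recip q)} := by
    intro q hq0
    have hstD : ((t ^ (2 * n - 1)) ^ q.natDegree) * t ^ q.natDegree = 1 := by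
      rw [← mul_pow, hst, one_pow]
    have hCmk : ∀ c : F, mkq F (2 * n) (C c) = algebraMap F (Rq F (2 * n)) c := by
      intro c
      have h5 := (Ideal.Quotient.mkₐ F
        (Ideal.span ({X ^ (2 * n) - 1} : Set F[X]))).commutes c
      rw [Ideal.Quotient.mkₐ_eq_mk] at h5
      rw [← h5]
      rfl
    have hC : mkq F (2 * n) (recip q)
        = algebraMap F (Rq F (2 * n)) (q.coeff 0)⁻¹ * mkq F (2 * n) q.reverse := by
      rw [show recip q = C (q.coeff 0)⁻¹ * q.reverse from rfl, map_mul, hCmk]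
    have hC' : mkq F (2 * n) q.reverse
        = algebraMap F (Rq F (2 * n)) (q.coeff 0) * mkq F (2 * n) (recip q) := by
      rw [hC, ← mul_assoc, ← map_mul, mul_inv_cancel₀ hq0, map_one, one_mul]
    have hrev' : mkq F (2 * n) q.reverse
        = τ (mkq F (2 * n) q) * t ^ q.natDegree := by
      rw [← hrev q, mul_assoc, hstD, mul_one]
    apply le_antisymm
    · rw [Ideal.span_le, Set.singleton_subset_iff]
      refine Ideal.mem_span_singleton'.mpr
        ⟨algebraMap F (Rq F (2 * n)) (q.coeff 0) * (t ^ (2 * n - 1)) ^ q.natDegree, ?_⟩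
      rw [← hrev q, hC']
      ring
    · rw [Ideal.span_le, Set.singleton_subset_iff]
      refine Ideal.mem_span_singleton'.mpr
        ⟨algebraMap F (Rq F (2 * n)) (q.coeff 0)⁻¹ * t ^ q.natDegree, ?_⟩
      rw [hC, hrev']
      ring
  have hmapspan : ∀ x : Rq F (2 * n),
      Ideal.map τ (Ideal.span {x}) = Ideal.span {τ x} := by
    intro x
    rw [Ideal.map_span, Set.image_singleton]
  have hτe : τ e = estar := by
    refine idem_unique (by rw [← map_mul, hidem]) hidemstar ?_
    rw [← hmapspan, hgen, hmapspan, hassoc g hg0, hgenstar]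
  have hτes : τ estar = e := by
    refine idem_unique (by rw [← map_mul, hidemstar]) hidem ?_
    have hrg0 : (recip g).coeff 0 ≠ 0 := by
      rw [recip_coeff_zero hgm]
      exact inv_ne_zero hg0
    rw [← hmapspan, hgenstar, hmapspan, hassoc (recip g) hrg0, recip_recip hgm hg0, hgen]
  -- conjugation relation
  have hYu1 : Y * u = u ^ (2 * n - 1) * Y := by
    have hcast : ((2 * n - 1 : ℕ) : ZMod (2 * n)) = -1 := by
      have h1 : ((2 * n : ℕ) : ZMod (2 * n)) = 0 := ZMod.natCast_self _
      rw [Nat.cast_sub (by omega : 1 ≤ 2 * n), h1, Nat.cast_one, zero_sub]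
    rw [hu, hY, ← map_pow, QuaternionGroup.a_one_pow, ← map_mul, ← map_mul,
      QuaternionGroup.xa_mul_a, QuaternionGroup.a_mul_xa, hcast]
    norm_num
  have hYuk : ∀ k : ℕ, Y * u ^ k = u ^ ((2 * n - 1) * k) * Y := by
    intro k
    induction k with
    | zero => simp
    | succ k ih =>
      rw [pow_succ, ← mul_assoc, ih, mul_assoc, hYu1, ← mul_assoc, ← pow_add,
        show (2 * n - 1) * k + (2 * n - 1) = (2 * n - 1) * (k + 1) by ring]
  have hπtk : ∀ k : ℕ, π ((t ^ (2 * n - 1)) ^ k) = u ^ ((2 * n - 1) * k) := by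
    intro k
    rw [← pow_mul, map_pow, hπt]
  have hYπt : ∀ k : ℕ, Y * π (t ^ k) = π (τ (t ^ k)) * Y := by
    intro k
    rw [map_pow τ, hτt, hπtk, map_pow π, hπt, hYuk]
  have hconj : ∀ z : Rq F (2 * n), Y * π z = π (τ z) * Y := by
    intro z
    obtain ⟨v, hv⟩ := hrep z
    rw [← hv, map_sum, map_sum, map_sum, Finset.mul_sum, Finset.sum_mul]
    refine Finset.sum_congr rfl fun i _ => ?_
    simp only [map_smul, mul_smul_comm, smul_mul_assoc, hYπt]
  -- idempotency and centrality
  have hsum_idem : (e + estar) * (e + estar) = e + estar := by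
    rw [add_mul, mul_add, mul_add, hidem, hidemstar, hee0, hese, add_zero, zero_add]
  have hcC : π e + π estar = π (e + estar) := (map_add π e estar).symm
  have hidemc : (π e + π estar) * (π e + π estar) = π e + π estar := by
    rw [hcC, ← map_mul, hsum_idem]
  have hcY : (π e + π estar) * Y = Y * (π e + π estar) := by
    rw [hcC]
    conv_rhs => rw [hconj]
    rw [map_add τ, hτe, hτes, map_add, map_add, add_comm (π estar) (π e)]
  have hcu_z : ∀ z : Rq F (2 * n),
      (π e + π estar) * π z = π z * (π e + π estar) := by
    intro z
    rw [hcC, ← map_mul, ← map_mul, mul_comm (e + estar) z]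
  have hvalcast : ∀ i : ZMod (2 * n), ((i.val : ℕ) : ZMod (2 * n)) = i := fun i =>
    ZMod.natCast_rightInverse i
  have hcentral : ∀ w, (π e + π estar) * w = w * (π e + π estar) := by
    intro w
    induction w using MonoidAlgebra.induction_on with
    | of g0 =>
      rcases g0 with i | i
      · have h1 : MonoidAlgebra.of F (QuaternionGroup n) (QuaternionGroup.a i)
            = π (t ^ (i.val : ℕ)) := by rw [hofk, hvalcast]
        rw [h1]; exact hcu_z _
      · have h1 : MonoidAlgebra.of F (QuaternionGroup n) (QuaternionGroup.xa i)
            = Y * π (t ^ (i.val : ℕ)) := by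
          rw [hofk, hvalcast, hY, ← map_mul, QuaternionGroup.xa_mul_a, zero_add]
        rw [h1, ← mul_assoc, hcY, mul_assoc, hcu_z, ← mul_assoc]
    | add w1 w2 h1 h2 => rw [mul_add, h1, h2, ← add_mul]
    | smul r w1 h1 => rw [mul_smul_comm, smul_mul_assoc, h1]
  -- dimension count
  haveI instR : FiniteDimensional F (Rq F (2 * n)) := finiteDimensional_Rq hn2
  haveI instA : FiniteDimensional F (MonoidAlgebra F (QuaternionGroup n)) :=
    Module.Finite.of_basis
      (MonoidAlgebra.basis (QuaternionGroup n) F)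
  -- dimension of the ideal of e + estar inside Rq
  have hspanE : Ideal.span {e + estar} = Ideal.span {e} ⊔ Ideal.span {estar} := by
    apply le_antisymm
    · rw [Ideal.span_le, Set.singleton_subset_iff]
      exact Submodule.add_mem _ (Ideal.mem_sup_left (Ideal.subset_span rfl))
        (Ideal.mem_sup_right (Ideal.subset_span rfl))
    · apply sup_le
      · rw [Ideal.span_le, Set.singleton_subset_iff]
        exact Ideal.mem_span_singleton'.mpr ⟨e, by rw [mul_add, hidem, hee0, add_zero]⟩
      · rw [Ideal.span_le, Set.singleton_subset_iff]
        exact Ideal.mem_span_singleton'.mpr ⟨estar, by rw [mul_add, hidemstar, hese, zero_add]⟩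
  have hEe : finrank F ((Ideal.span {e}).restrictScalars F) = f.natDegree := by
    rw [hgen]
    exact finrank_span_mk hn2 hmonic hdd hg
  have hEs : finrank F ((Ideal.span {estar}).restrictScalars F) = f.natDegree := by
    rw [hgenstar]
    have h1 := finrank_span_mk hn2 hfsm (by rw [hfsd]; exact hdd) hfsg
    rwa [hfsd] at h1
  have hinter : (Ideal.span {e}).restrictScalars F ⊓ (Ideal.span {estar}).restrictScalars F
      = ⊥ := by
    rw [eq_bot_iff]
    rintro x hx
    obtain ⟨hx1, hx2⟩ := Submodule.mem_inf.mp hx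
    rw [Submodule.restrictScalars_mem] at hx1 hx2
    obtain ⟨r1, hr1⟩ := Ideal.mem_span_singleton'.mp hx1
    obtain ⟨s1, hs1⟩ := Ideal.mem_span_singleton'.mp hx2
    have h1 : x * e = x := by rw [← hr1, mul_assoc, hidem]
    have h2 : x * e = 0 := by rw [← hs1, mul_assoc, hese, mul_zero]
    rw [Submodule.mem_bot, ← h1, h2]
  have hIe : finrank F ((Ideal.span {e + estar}).restrictScalars F) = 2 * f.natDegree := by
    rw [hspanE, restrictScalars_sup]
    have h3 := Submodule.finrank_sup_add_finrank_inf_eq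
      ((Ideal.span {e}).restrictScalars F) ((Ideal.span {estar}).restrictScalars F)
    rw [hinter, finrank_bot, add_zero, hEe, hEs] at h3
    omega
  -- transfer to the group algebra
  set πL : Rq F (2 * n) →ₗ[F] MonoidAlgebra F (QuaternionGroup n) := π.toLinearMap with hπL
  set πYL : Rq F (2 * n) →ₗ[F] MonoidAlgebra F (QuaternionGroup n) :=
    (LinearMap.mulRight F Y).comp π.toLinearMap with hπYL
  set mulc : MonoidAlgebra F (QuaternionGroup n) →ₗ[F] MonoidAlgebra F (QuaternionGroup n) :=
    LinearMap.mulRight F (π e + π estar) with hmulc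
  set mulE : Rq F (2 * n) →ₗ[F] Rq F (2 * n) := LinearMap.mulRight F (e + estar) with hmulE
  have h_spanc : (Ideal.span {π e + π estar}).restrictScalars F = Submodule.map mulc ⊤ := by
    ext x
    rw [Submodule.restrictScalars_mem, Submodule.mem_map]
    constructor
    · intro hx
      obtain ⟨r, hr⟩ := Submodule.mem_span_singleton.mp hx
      refine ⟨r, trivial, ?_⟩
      rw [smul_eq_mul] at hr
      rw [hmulc, LinearMap.mulRight_apply, hr]
    · rintro ⟨r, -, rfl⟩
      exact Submodule.mem_span_singleton.mpr
        ⟨r, by rw [hmulc, LinearMap.mulRight_apply, smul_eq_mul]⟩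
  have hSa_eq : Sa = Submodule.map πL ⊤ := by
    apply le_antisymm
    · rw [hSadef, MonoidAlgebra.supported_eq_span_single, Submodule.span_le]
      rintro x ⟨g0, ⟨i, rfl⟩, rfl⟩
      refine ⟨t ^ (i.val : ℕ), trivial, ?_⟩
      rw [hπL, AlgHom.toLinearMap_apply, hofk, hvalcast]
      rfl
    · rintro x ⟨z, -, rfl⟩
      exact hmemSa z
  have hSxa_eq : Sxa = Submodule.map πYL ⊤ := by
    apply le_antisymm
    · rw [hSxadef, MonoidAlgebra.supported_eq_span_single, Submodule.span_le]
      rintro x ⟨g0, ⟨i, rfl⟩, rfl⟩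
      refine ⟨t ^ (((-i : ZMod (2 * n)).val : ℕ)), trivial, ?_⟩
      rw [hπYL, LinearMap.comp_apply, AlgHom.toLinearMap_apply, LinearMap.mulRight_apply,
        hofk, hvalcast,
        show MonoidAlgebra.of F (QuaternionGroup n) (QuaternionGroup.a (-i))
          = MonoidAlgebra.single (QuaternionGroup.a (-i)) 1 from rfl, hsingle_mul_Y, neg_neg]
    · rintro x ⟨z, -, rfl⟩
      exact hmemSxa z
  have hcomm1 : mulc.comp πL = πL.comp mulE := by
    refine LinearMap.ext fun z => ?_
    simp only [hmulc, hπL, hmulE, LinearMap.comp_apply, LinearMap.mulRight_apply,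
      AlgHom.toLinearMap_apply]
    rw [hcC, ← map_mul]
  have hcomm2 : mulc.comp πYL = πYL.comp mulE := by
    refine LinearMap.ext fun z => ?_
    simp only [hmulc, hπYL, hmulE, LinearMap.comp_apply, LinearMap.mulRight_apply,
      AlgHom.toLinearMap_apply]
    rw [mul_assoc, ← hcY, ← mul_assoc, hcC, ← map_mul]
  have hmapE : Submodule.map mulE ⊤ = (Ideal.span {e + estar}).restrictScalars F := by
    ext x
    rw [Submodule.restrictScalars_mem, Submodule.mem_map]
    constructor
    · rintro ⟨r, -, rfl⟩
      exact Submodule.mem_span_singleton.mpr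
        ⟨r, by rw [hmulE, LinearMap.mulRight_apply, smul_eq_mul]⟩
    · intro hx
      obtain ⟨r, hr⟩ := Submodule.mem_span_singleton.mp hx
      refine ⟨r, trivial, ?_⟩
      rw [smul_eq_mul] at hr
      rw [hmulE, LinearMap.mulRight_apply, hr]
  have hTop : Sa ⊔ Sxa = (⊤ : Submodule F (MonoidAlgebra F (QuaternionGroup n))) := by
    rw [hSadef, hSxadef, MonoidAlgebra.supported_eq_map, MonoidAlgebra.supported_eq_map,
      ← Submodule.map_sup, ← Finsupp.supported_union]
    rw [show Set.range (QuaternionGroup.a : ZMod (2 * n) → QuaternionGroup n)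
        ∪ Set.range (QuaternionGroup.xa : ZMod (2 * n) → QuaternionGroup n) = Set.univ by
      apply Set.eq_univ_iff_forall.mpr
      intro g0
      rcases g0 with i | i
      · exact Or.inl ⟨i, rfl⟩
      · exact Or.inr ⟨i, rfl⟩]
    rw [Finsupp.supported_univ, Submodule.map_top]
    exact LinearEquiv.range _
  have hfinal : Submodule.map mulc ⊤
      = Submodule.map πL ((Ideal.span {e + estar}).restrictScalars F)
        ⊔ Submodule.map πYL ((Ideal.span {e + estar}).restrictScalars F) := by
    rw [← hTop, Submodule.map_sup, hSa_eq, hSxa_eq, ← Submodule.map_comp, ← Submodule.map_comp,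
      hcomm1, hcomm2, Submodule.map_comp, Submodule.map_comp, hmapE]
  have hπLinj : Function.Injective πL := hπinj
  have hYYi : Y * MonoidAlgebra.of F (QuaternionGroup n) ((QuaternionGroup.xa 0)⁻¹) = 1 := by
    rw [hY, ← map_mul, mul_inv_cancel, map_one]
  have hπYinj : Function.Injective πYL := by
    intro z w hzw
    simp only [hπYL, LinearMap.comp_apply, AlgHom.toLinearMap_apply,
      LinearMap.mulRight_apply] at hzw
    apply hπinj
    have h1 := congrArg
      (fun x => x * MonoidAlgebra.of F (QuaternionGroup n) ((QuaternionGroup.xa 0)⁻¹)) hzw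
    simp only [mul_assoc, hYYi, mul_one] at h1
    exact h1
  have hfr1 : finrank F
      (Submodule.map πL ((Ideal.span {e + estar}).restrictScalars F)) = 2 * f.natDegree := by
    rw [← LinearEquiv.finrank_eq (Submodule.equivMapOfInjective πL hπLinj
      ((Ideal.span {e + estar}).restrictScalars F))]
    exact hIe
  have hfr2 : finrank F
      (Submodule.map πYL ((Ideal.span {e + estar}).restrictScalars F)) = 2 * f.natDegree := by
    rw [← LinearEquiv.finrank_eq (Submodule.equivMapOfInjective πYL hπYinj
      ((Ideal.span {e + estar}).restrictScalars F))]
    exact hIe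
  have hd1 : Submodule.map πL ((Ideal.span {e + estar}).restrictScalars F) ≤ Sa := by
    rw [hSa_eq]; exact Submodule.map_mono le_top
  have hd2 : Submodule.map πYL ((Ideal.span {e + estar}).restrictScalars F) ≤ Sxa := by
    rw [hSxa_eq]; exact Submodule.map_mono le_top
  have hdisj : Disjoint Sa Sxa := by
    rw [hSadef, hSxadef, MonoidAlgebra.supported_eq_map, MonoidAlgebra.supported_eq_map]
    refine Submodule.disjoint_map (LinearEquiv.injective _) (Finsupp.disjoint_supported_supported ?_)
    rw [Set.disjoint_left]
    rintro x ⟨i, rfl⟩ ⟨j, hj⟩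
    cases hj
  have hintbot : Submodule.map πL ((Ideal.span {e + estar}).restrictScalars F)
      ⊓ Submodule.map πYL ((Ideal.span {e + estar}).restrictScalars F) = ⊥ :=
    (hdisj.mono hd1 hd2).eq_bot
  have hdim : finrank F ((Ideal.span {π e + π estar}).restrictScalars F)
      = 4 * f.natDegree := by
    rw [h_spanc, hfinal]
    have h4 := Submodule.finrank_sup_add_finrank_inf_eq
      (Submodule.map πL ((Ideal.span {e + estar}).restrictScalars F))
      (Submodule.map πYL ((Ideal.span {e + estar}).restrictScalars F))
    rw [hintbot, finrank_bot, add_zero, hfr1, hfr2] at h4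
    omega
  exact ⟨hfsm, hfsirr, hfsdvd, hidemc, hcentral, hdim⟩
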